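/- Let F be a finite field of odd cardinality q with quadratic character χ, and S_m(x,y) = χ(x)·χ(m·x + y). If (u,v) ≠ (0,0) and m·u + v = 0, then u ≠ 0 and the autocorrelation ∑_{x,y} S_m(x,y)·S_m(x+u,y+v) equals 1 - q. -/

import Mathlib

theorem circulant_legendre_autocorrelation_case2
    (F : Type*) [Field F] [Fintype F] [DecidableEq F]
    (hodd : Odd (Fintype.card F))
    (χ : F → ℤ) (hχ : ∀ x, χ x = quadraticChar F x)
    (S : F → F × F → ℤ) (hS : ∀ m x y, S m (x, y) = χ x * χ (m * x + y))
    (m : F) (u v : F) (huv : (u, v) ≠ (0, 0)) (h : m * u + v = 0) :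
    u ≠ 0 ∧
    ∑ x : F, ∑ y : F, S m (x, y) * S m (x + u, y + v) = 1 - (Fintype.card F : ℤ) := by
  have hF2 : ringChar F ≠ 2 := by
    intro hc
    have := FiniteField.even_card_of_char_two (F := F) hc
    rcases hodd with ⟨k, hk⟩
    omega
  have hu : u ≠ 0 := by
    intro hu0
    apply huv
    have hv : v = 0 := by
      have hh := h
      rw [hu0, mul_zero, zero_add] at hh
      exact hh
    rw [hu0, hv]
  refine ⟨hu, ?_⟩
  set ψ := quadraticChar F with hψ
  have hsq : ∀ a : F, ∑ y : F, (ψ (a + y) : ℤ) ^ 2 = (Fintype.card F : ℤ) - 1 := by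
    intro a
    have hbij : ∑ y : F, (ψ (a + y) : ℤ) ^ 2 = ∑ t : F, (ψ t : ℤ) ^ 2 :=
      Fintype.sum_bijective (fun y => a + y) (Equiv.addLeft a).bijective _ _ (fun y => rfl)
    rw [hbij, ← Finset.add_sum_erase _ _ (Finset.mem_univ (0 : F)), quadraticChar_zero]
    rw [Finset.sum_congr rfl (fun t ht =>
      (quadraticChar_sq_one (F := F) (Finset.ne_of_mem_erase ht) : (ψ t : ℤ) ^ 2 = 1)),
      Finset.sum_const, Finset.card_erase_of_mem (Finset.mem_univ _)]
    simp [Finset.card_univ, Fintype.card_pos]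
  have key : ∑ x : F, (ψ x : ℤ) * ψ (x + u) = -1 := by
    have step1 : ∑ x : F, (ψ x : ℤ) * ψ (x + u) =
        ∑ x ∈ Finset.univ.erase (0 : F), (ψ (1 + u * x⁻¹) : ℤ) := by
      rw [← Finset.add_sum_erase _ _ (Finset.mem_univ (0 : F)), quadraticChar_zero]
      rw [zero_mul, zero_add]
      refine Finset.sum_congr rfl fun x hx => ?_
      have hx0 : x ≠ 0 := Finset.ne_of_mem_erase hx
      have hxx : x * (x + u) = x ^ 2 * (1 + u * x⁻¹) := by
        field_simp
      have h1 : (ψ x : ℤ) * ψ (x + u) = (ψ (x * (x + u)) : ℤ) := by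
        rw [map_mul]
      rw [h1, hxx, map_mul, quadraticChar_sq_one' hx0, one_mul]
    rw [step1]
    have step2 : ∑ x ∈ Finset.univ.erase (0 : F), (ψ (1 + u * x⁻¹) : ℤ) =
        ∑ t ∈ Finset.univ.erase (1 : F), (ψ t : ℤ) := by
      apply Finset.sum_nbij' (fun x => 1 + u * x⁻¹) (fun t => u * (t - 1)⁻¹)
      · intro x hx
        have hx0 : x ≠ 0 := Finset.ne_of_mem_erase hx
        simp only [Finset.mem_erase, Finset.mem_univ, and_true]
        intro h1
        have h2 : u * x⁻¹ = 0 := by linear_combination h1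
        rcases mul_eq_zero.mp h2 with h' | h'
        · exact hu h'
        · exact hx0 (inv_eq_zero.mp h')
      · intro t ht
        have ht1 : t ≠ 1 := Finset.ne_of_mem_erase ht
        simp only [Finset.mem_erase, Finset.mem_univ, and_true]
        intro h'
        rcases mul_eq_zero.mp h' with h'' | h''
        · exact hu h''
        · exact ht1 (by
            have h3 : t - 1 = 0 := inv_eq_zero.mp h''
            linear_combination h3)
      · intro x hx
        have hx0 : x ≠ 0 := Finset.ne_of_mem_erase hx
        field_simp
        simp [hu]
      · intro t ht
        have ht1 : t ≠ 1 := Finset.ne_of_mem_erase ht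
        have h1 : t - 1 ≠ 0 := sub_ne_zero.mpr ht1
        field_simp
        ring
      · intro x hx; rfl
    rw [step2]
    have hall : ∑ t : F, (ψ t : ℤ) = 0 := quadraticChar_sum_zero hF2
    have hsplit := Finset.add_sum_erase Finset.univ (fun t : F => (ψ t : ℤ))
      (Finset.mem_univ (1 : F))
    rw [hall] at hsplit
    have hone : (ψ (1 : F) : ℤ) = 1 := by rw [map_one]
    linarith [hsplit, hone.ge, hone.le]
  have hterm : ∀ x y : F, S m (x, y) * S m (x + u, y + v) =
      ((ψ x : ℤ) * ψ (x + u)) * (ψ (m * x + y) : ℤ) ^ 2 := by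
    intro x y
    have hmv : m * (x + u) + (y + v) = m * x + y := by linear_combination h
    rw [hS, hS, hχ, hχ, hχ, hχ, hmv]
    ring
  calc ∑ x : F, ∑ y : F, S m (x, y) * S m (x + u, y + v)
      = ∑ x : F, ((ψ x : ℤ) * ψ (x + u)) * ((Fintype.card F : ℤ) - 1) := by
        refine Finset.sum_congr rfl fun x _ => ?_
        rw [← hsq (m * x), Finset.mul_sum]
        exact Finset.sum_congr rfl fun y _ => hterm x y
    _ = 1 - (Fintype.card F : ℤ) := by
        rw [← Finset.sum_mul, key]; ring
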